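/- If G is a complete k-partite graph, then ρ_T(G) ≤ k. -/
import Mathlib


/-- A min-plus `k`-tropical dot product representation of `G` with threshold `t`:
distinct vertices `x, y` are adjacent iff `min_{1 ≤ i ≤ k} (f(x)_i + f(y)_i) ≥ t`
(equivalently, every coordinate sum is at least `t`). -/
def MinPlusRep {V : Type*} (G : SimpleGraph V) (k : ℕ) (f : V → Fin k → ℝ) (t : ℝ) : Prop :=
  0 < t ∧ ∀ x y : V, x ≠ y → (G.Adj x y ↔ ∀ i : Fin k, t ≤ f x i + f y i)

/-- The min-plus tropical dot product dimension `ρ_T(G)`. -/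
noncomputable def rhoT {V : Type*} (G : SimpleGraph V) : ℕ :=
  sInf {k : ℕ | 0 < k ∧ ∃ (f : V → Fin k → ℝ) (t : ℝ), MinPlusRep G k f t}

/-- If `G` is a complete `k`-partite graph (parts are the fibers of a surjection
`P : V → Fin k`, and two distinct vertices are adjacent iff they lie in different parts),
then `ρ_T(G) ≤ k`. -/
theorem stmt_15 {V : Type*} [Fintype V] [Nonempty V] (G : SimpleGraph V) (k : ℕ)
    (P : V → Fin k) (hsurj : Function.Surjective P)
    (hadj : ∀ x y : V, G.Adj x y ↔ P x ≠ P y) :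
    rhoT G ≤ k := by
  have hk : 0 < k := Fin.pos_iff_nonempty.mpr ⟨P (Classical.arbitrary V)⟩
  apply Nat.sInf_le
  refine ⟨hk, fun x i => if P x = i then 0 else 1, 1, one_pos, fun x y hxy => ?_⟩
  rw [hadj]
  constructor
  · intro hne i
    by_cases hx : P x = i <;> by_cases hy : P y = i <;> simp_all <;> norm_num
  · intro h heq
    have := h (P x)
    simp [heq] at this
    linarith
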